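/- For every integer q ≥ 4 and every proper coloring x ∈ {1,…,q}^n with n ≥ 1, define Q(x) = (1/D(n+1))·∑_{i=1}^n C(2i)·P(x̂_i) and Q*(x) = (1/D(n+1))·∑_{i=1}^n C(2n−2i+2)·P(x̂_i). Then Q(x) = Q*(x) = P(x)·C(n+1). -/

import Mathlib

open Polynomial Polynomial.Chebyshev

/-- `C n = T_{|n|}(√q/2)`; Mathlib's `T` is even in its integer index. -/
noncomputable def C (q : ℝ) (n : ℤ) : ℝ := (T ℝ n).eval (Real.sqrt q / 2)

/-- `D n = √q · U_{n-1}(√q/2)`, the odd extension (`D 0 = 0`). -/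
noncomputable def D (q : ℝ) (n : ℤ) : ℝ := Real.sqrt q * (U ℝ (n - 1)).eval (Real.sqrt q / 2)

/-- A word is a proper coloring if no two consecutive letters are equal. -/
def Proper {q : ℕ} (x : List (Fin q)) : Prop := x.IsChain (· ≠ ·)

instance {q : ℕ} (x : List (Fin q)) : Decidable (Proper x) := by
  unfold Proper; infer_instance

/-- The recursively defined cylinder measure: `P [] = 1`, `P x = 0` for non-proper `x`,
and `P x = (1/D(n+1)) ∑_{i=1}^n C(n-2i+1) P(x̂ᵢ)` for proper `x` of length `n`,
where `x̂ᵢ` deletes the `i`-th letter (here indexed from `0`, so the coefficient of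
`x.eraseIdx i` is `C(n - 2(i+1) + 1) = C(n - 2i - 1)`). -/
noncomputable def P (q : ℕ) : List (Fin q) → ℝ
  | [] => 1
  | a :: l =>
    if Proper (a :: l) then
      (1 / D q (((a :: l).length : ℤ) + 1)) *
        ∑ i : Fin (a :: l).length,
          C q (((a :: l).length : ℤ) - 2 * (i : ℤ) - 1) * P q ((a :: l).eraseIdx i)
    else 0
termination_by x => x.length
decreasing_by
  have := i.isLt
  simp only [List.length_eraseIdx, this, if_pos]
  omega


variable {R : Type*} [CommRing R]

theorem T_mul_U' (m : ℤ) : ∀ k : ℤ, 2 * T R m * U R (k - 1) = U R (m + k - 1) - U R (m - k - 1) := by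
  intro k
  induction k using Polynomial.Chebyshev.induct with
  | zero => simp [U_neg_one]
  | one =>
    simp only [sub_self, add_sub_cancel_right, sub_sub, U_zero, mul_one]
    norm_num
    linear_combination 2 * (T_eq_U_sub_X_mul_U R m) + (U_sub_two R m)
  | add_two k ih1 ih2 =>
    have h₁ := U_add_two R (m + k - 1)
    have h₂ := U_sub_two R (m - k - 1)
    have h₃ := U_add_two R (k - 1)
    linear_combination (norm := ring_nf) 2 * T R m * h₃ - h₁ + h₂ + 2 * (X : R[X]) * ih1 - ih2
  | neg_add_one k ih1 ih2 =>
    have h₁ := U_add_two R (m + (-k - 1) - 1)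
    have h₂ := U_sub_two R (m - (-k - 1) - 1)
    have h₃ := U_add_two R (-k - 1 - 1)
    linear_combination (norm := ring_nf) 2 * T R m * h₃ - h₁ + h₂ + 2 * (X : R[X]) * ih1 - ih2


lemma two_C_mul (q : ℝ) (a b : ℤ) : 2 * _root_.C q a * _root_.C q b = _root_.C q (a + b) + _root_.C q (a - b) := by
  unfold _root_.C
  have h := congrArg (eval (Real.sqrt q / 2)) (Polynomial.Chebyshev.T_mul_T ℝ a b)
  simpa using h

lemma D_neg' (q : ℝ) (a : ℤ) : D q (-a) = - D q a := by
  unfold D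
  have h := congrArg (eval (Real.sqrt q / 2)) (U_neg_sub_one ℝ a)
  rw [show -a - 1 = -a - 1 from rfl]
  simp only [eval_neg] at h
  rw [h]
  ring

lemma D_C_comm (q : ℝ) (a b : ℤ) : D q a * _root_.C q b - _root_.C q a * D q b = D q (a - b) := by
  unfold _root_.C D
  have h1 := congrArg (eval (Real.sqrt q / 2)) (T_mul_U' (R := ℝ) b a)
  have h2 := congrArg (eval (Real.sqrt q / 2)) (T_mul_U' (R := ℝ) a b)
  have h3 := congrArg (eval (Real.sqrt q / 2)) (U_neg_sub_one ℝ (a - b))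
  rw [show b + a - 1 = a + b - 1 by ring, show b - a - 1 = -(a-b) - 1 by ring] at h1
  simp only [eval_mul, eval_sub, eval_ofNat, eval_neg] at h1 h2 h3
  linear_combination (Real.sqrt q) / 2 * h1 - (Real.sqrt q) / 2 * h2 - (Real.sqrt q) / 2 * h3

lemma C_diff (q : ℝ) (hq : 0 ≤ q) (a b : ℤ) :
    2 * q * (_root_.C q (a + b) - _root_.C q (a - b)) = (q - 4) * (D q a * D q b) := by
  unfold _root_.C D
  have hs : Real.sqrt q * Real.sqrt q = q := Real.mul_self_sqrt hq
  have hA := congrArg (eval (Real.sqrt q / 2)) (T_eq_X_mul_T_sub_pol_U ℝ (a - 1))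
  have hB := congrArg (eval (Real.sqrt q / 2)) (T_mul_U' (R := ℝ) (a + 1) b)
  have hC := congrArg (eval (Real.sqrt q / 2)) (T_mul_U' (R := ℝ) a b)
  have hD := congrArg (eval (Real.sqrt q / 2)) (T_eq_U_sub_X_mul_U ℝ (a + b))
  have hE := congrArg (eval (Real.sqrt q / 2)) (T_eq_U_sub_X_mul_U ℝ (a - b))
  rw [show a - 1 + 2 = a + 1 by ring, show a - 1 + 1 = a by ring] at hA
  rw [show a + 1 + b - 1 = a + b by ring, show a + 1 - b - 1 = a - b by ring] at hB
  simp only [eval_mul, eval_sub, eval_add, eval_ofNat, eval_one, eval_pow, eval_X] at hA hB hC hD hE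
  linear_combination 2 * q * hD - 2 * q * hE - 2 * q * hB + q * Real.sqrt q * hC
    + 4 * q * (eval (Real.sqrt q / 2) (U ℝ (b-1))) * hA
    + 4 * (eval (Real.sqrt q / 2) (U ℝ (b-1))) * (eval (Real.sqrt q / 2) (U ℝ (a-1))) * hs

lemma U_eval_ge (x : ℝ) (hx : 1 ≤ x) :
    ∀ m : ℕ, 1 ≤ (U ℝ (m : ℤ)).eval x ∧ (U ℝ (m : ℤ)).eval x ≤ (U ℝ ((m : ℤ) + 1)).eval x := by
  intro m
  induction m with
  | zero => simp; nlinarith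
  | succ m ih =>
    have hrec := congrArg (eval x) (U_add_two ℝ (m : ℤ))
    simp only [eval_mul, eval_sub, eval_ofNat, eval_X] at hrec
    push_cast
    constructor
    · nlinarith [ih.1, ih.2]
    · rw [show (m:ℤ) + 1 + 1 = (m:ℤ) + 2 by ring, hrec]
      nlinarith [ih.1, ih.2]

lemma D_pos (q : ℝ) (hq : 4 ≤ q) (k : ℤ) (hk : 1 ≤ k) : 0 < D q k := by
  have h0 : (0:ℝ) ≤ q := by linarith
  have hs : Real.sqrt q * Real.sqrt q = q := Real.mul_self_sqrt h0
  have h2 : (2:ℝ) ≤ Real.sqrt q := by nlinarith [Real.sqrt_nonneg q]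
  have h1 : (1:ℝ) ≤ Real.sqrt q / 2 := by linarith
  unfold D
  have hnn : (0:ℤ) ≤ k - 1 := by omega
  obtain ⟨m, hm⟩ : ∃ m : ℕ, (m : ℤ) = k - 1 := ⟨(k-1).toNat, Int.toNat_of_nonneg hnn⟩
  rw [← hm]
  have := (U_eval_ge (Real.sqrt q / 2) h1 m).1
  nlinarith

lemma D_zero' (q : ℝ) : D q 0 = 0 := by
  unfold D
  norm_num [U_neg_one]

-- list lemmas
variable {α : Type*}

lemma erase_comm' : ∀ (l : List α) (i j : ℕ), i ≤ j →
    (l.eraseIdx i).eraseIdx j = (l.eraseIdx (j+1)).eraseIdx i := by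
  intro l
  induction l with
  | nil => simp
  | cons a l ih =>
    intro i j hij
    cases i with
    | zero => simp
    | succ i =>
      cases j with
      | zero => omega
      | succ j =>
        simp only [List.eraseIdx_cons_succ, List.cons.injEq, true_and]
        exact ih i j (by omega)

lemma proper_iff {q : ℕ} (x : List (Fin q)) :
    x.IsChain (· ≠ ·) ↔ ∀ (i : ℕ) (h : i + 1 < x.length), x[i]'(by omega) ≠ x[i+1]'h := by
  rw [List.isChain_iff_getElem]

lemma length_eraseIdx' (l : List α) (i : ℕ) (h : i < l.length) :
    (l.eraseIdx i).length = l.length - 1 := by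
  rw [List.length_eraseIdx]; simp [h]

lemma not_proper_erase {q : ℕ} {x : List (Fin q)} (hx : x.IsChain (· ≠ ·)) (i : ℕ)
    (hi : i < x.length) (hp : ¬ (x.eraseIdx i).IsChain (· ≠ ·)) :
    ∃ (h1 : 1 ≤ i) (h2 : i + 1 < x.length),
      x[i-1]'(by omega) = x[i+1]'h2 := by
  rw [proper_iff] at hp
  push_neg at hp
  obtain ⟨k, hk, heq⟩ := hp
  have hlen : (x.eraseIdx i).length = x.length - 1 := length_eraseIdx' x i hi
  rcases lt_trichotomy (k+1) i with h | h | h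
  · rw [List.getElem_eraseIdx_of_lt (l := x) (i := i) (j := k) (by omega) (by omega),
      List.getElem_eraseIdx_of_lt (l := x) (i := i) (j := (k+1)) (by omega) (by omega)] at heq
    exact absurd heq ((proper_iff x).mp hx k (by omega))
  · -- i = k+1
    rw [List.getElem_eraseIdx_of_lt (l := x) (i := i) (j := k) (by omega) (by omega),
      List.getElem_eraseIdx_of_ge (l := x) (i := i) (j := (k+1)) (by omega) (by omega)] at heq
    refine ⟨by omega, by omega, ?_⟩
    have e1 : i - 1 = k := by omega
    have e2 : i + 1 = k + 1 + 1 := by omega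
    simp_rw [e1, e2]
    exact heq
  · rw [List.getElem_eraseIdx_of_ge (l := x) (i := i) (j := k) (by omega) (by omega),
      List.getElem_eraseIdx_of_ge (l := x) (i := i) (j := (k+1)) (by omega) (by omega)] at heq
    exact absurd heq ((proper_iff x).mp hx (k+1) (by omega))

lemma getElem_congr' (l : List α) (a b : ℕ) (h : a = b) (ha : a < l.length) :
    l[a]'ha = l[b]'(h ▸ ha) := by subst h; rfl

lemma getElem_ext (l : List α) {a b : ℕ} (h : a = b) (ha : a < l.length) (hb : b < l.length) :
    l[a]'ha = l[b]'hb := by subst h; rfl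

lemma erase_erase_eq {q : ℕ} (x : List (Fin q)) (i : ℕ) (h1 : 1 ≤ i) (h2 : i + 1 < x.length)
    (heq : x[i-1]'(by omega) = x[i+1]'h2) :
    (x.eraseIdx i).eraseIdx (i-1) = (x.eraseIdx i).eraseIdx i := by
  have hlen : (x.eraseIdx i).length = x.length - 1 := length_eraseIdx' x i (by omega)
  apply List.ext_getElem
  · rw [length_eraseIdx' (x.eraseIdx i) (i-1) (by omega),
      length_eraseIdx' (x.eraseIdx i) i (by omega)]
  · intro j hj hj'
    have hj1 : j < (x.eraseIdx i).length - 1 := by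
      rw [length_eraseIdx' (x.eraseIdx i) (i-1) (by omega)] at hj; omega
    rcases lt_trichotomy j (i-1) with h | h | h
    · have A : ((x.eraseIdx i).eraseIdx (i-1))[j]'hj = (x.eraseIdx i)[j]'(by omega) :=
        List.getElem_eraseIdx_of_lt (l := (x.eraseIdx i)) (i := (i-1)) (j := j) hj (by omega)
      have B : ((x.eraseIdx i).eraseIdx i)[j]'hj' = (x.eraseIdx i)[j]'(by omega) :=
        List.getElem_eraseIdx_of_lt (l := (x.eraseIdx i)) (i := i) (j := j) hj' (by omega)
      exact A.trans B.symm
    · have A : ((x.eraseIdx i).eraseIdx (i-1))[j]'hj = (x.eraseIdx i)[j+1]'(by omega) :=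
        List.getElem_eraseIdx_of_ge (l := (x.eraseIdx i)) (i := (i-1)) (j := j) hj (by omega)
      have A2 : (x.eraseIdx i)[j+1]'(by omega) = x[i+1]'(by omega) :=
        (getElem_ext (x.eraseIdx i) (by omega : j + 1 = i) (by omega) (by omega)).trans
          (List.getElem_eraseIdx_of_ge (l := x) (i := i) (j := i) (by omega) (by omega))
      have B : ((x.eraseIdx i).eraseIdx i)[j]'hj' = (x.eraseIdx i)[j]'(by omega) :=
        List.getElem_eraseIdx_of_lt (l := (x.eraseIdx i)) (i := i) (j := j) hj' (by omega)
      have B2 : (x.eraseIdx i)[j]'(by omega) = x[i-1]'(by omega) :=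
        (getElem_ext (x.eraseIdx i) (by omega : j = i - 1) (by omega) (by omega)).trans
          (List.getElem_eraseIdx_of_lt (l := x) (i := i) (j := (i-1)) (by omega) (by omega))
      exact (A.trans A2).trans (B.trans (B2.trans heq)).symm
    · have A : ((x.eraseIdx i).eraseIdx (i-1))[j]'hj = (x.eraseIdx i)[j+1]'(by omega) :=
        List.getElem_eraseIdx_of_ge (l := (x.eraseIdx i)) (i := (i-1)) (j := j) hj (by omega)
      have B : ((x.eraseIdx i).eraseIdx i)[j]'hj' = (x.eraseIdx i)[j+1]'(by omega) :=
        List.getElem_eraseIdx_of_ge (l := (x.eraseIdx i)) (i := i) (j := j) hj' (by omega)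
      exact A.trans B.symm

lemma not_proper_erase_erase {q : ℕ} (x : List (Fin q)) (i : ℕ) (h1 : 1 ≤ i)
    (h2 : i + 1 < x.length) (heq : x[i-1]'(by omega) = x[i+1]'h2)
    (j : ℕ) (hj : j + 1 < x.length) (hji : j ≠ i - 1) (hji' : j ≠ i) :
    ¬ ((x.eraseIdx i).eraseIdx j).IsChain (· ≠ ·) := by
  have hlen : (x.eraseIdx i).length = x.length - 1 := length_eraseIdx' x i (by omega)
  have hlen2 : ((x.eraseIdx i).eraseIdx j).length = x.length - 2 := by
    rw [length_eraseIdx' (x.eraseIdx i) j (by omega), hlen]; omega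
  rw [proper_iff]
  push_neg
  rcases lt_or_gt_of_ne hji with h | h
  · -- j < i - 1 : bad pair at positions i-2, i-1 of the doubly-erased list
    refine ⟨i - 2, by omega, ?_⟩
    have A : ((x.eraseIdx i).eraseIdx j)[i-2]'(by omega) = x[i-1]'(by omega) :=
      (List.getElem_eraseIdx_of_ge (l := (x.eraseIdx i)) (i := j) (j := (i-2)) (by omega) (by omega)).trans
        ((getElem_ext (x.eraseIdx i) (by omega : i-2+1 = i-1) (by omega) (by omega)).trans
          (List.getElem_eraseIdx_of_lt (l := x) (i := i) (j := (i-1)) (by omega) (by omega)))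
    have B : ((x.eraseIdx i).eraseIdx j)[i-2+1]'(by omega) = x[i+1]'(by omega) :=
      (List.getElem_eraseIdx_of_ge (l := (x.eraseIdx i)) (i := j) (j := (i-2+1)) (by omega) (by omega)).trans
        ((getElem_ext (x.eraseIdx i) (by omega : i-2+1+1 = i) (by omega) (by omega)).trans
          (List.getElem_eraseIdx_of_ge (l := x) (i := i) (j := i) (by omega) (by omega)))
    exact A.trans (heq.trans B.symm)
  · -- j ≥ i + 1 : bad pair at positions i-1, i
    refine ⟨i - 1, by omega, ?_⟩
    have A : ((x.eraseIdx i).eraseIdx j)[i-1]'(by omega) = x[i-1]'(by omega) :=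
      (List.getElem_eraseIdx_of_lt (l := (x.eraseIdx i)) (i := j) (j := (i-1)) (by omega) (by omega)).trans
        (List.getElem_eraseIdx_of_lt (l := x) (i := i) (j := (i-1)) (by omega) (by omega))
    have B : ((x.eraseIdx i).eraseIdx j)[i-1+1]'(by omega) = x[i+1]'(by omega) :=
      (List.getElem_eraseIdx_of_lt (l := (x.eraseIdx i)) (i := j) (j := (i-1+1)) (by omega) (by omega)).trans
        ((getElem_ext (x.eraseIdx i) (by omega : i-1+1 = i) (by omega) (by omega)).trans
          (List.getElem_eraseIdx_of_ge (l := x) (i := i) (j := i) (by omega) (by omega)))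
    exact A.trans (heq.trans B.symm)


lemma P_nil {q : ℕ} : P q ([] : List (Fin q)) = 1 := by rw [P]

lemma P_not_proper {q : ℕ} {y : List (Fin q)} (hy : ¬ Proper y) : P q y = 0 := by
  cases y with
  | nil => exact absurd List.isChain_nil hy
  | cons a l => rw [P, if_neg hy]

lemma P_eq {q : ℕ} {y : List (Fin q)} (hy : Proper y) (hne : y ≠ []) :
    P q y = (1 / D q ((y.length : ℤ) + 1)) *
      ∑ i ∈ Finset.range y.length, C q ((y.length : ℤ) - 2 * (i : ℤ) - 1) * P q (y.eraseIdx i) := by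
  cases y with
  | nil => exact absurd rfl hne
  | cons a l =>
    rw [P, if_pos hy, ← Fin.sum_univ_eq_sum_range]

section RZero
open Finset

lemma pairing (q : ℕ) (x : List (Fin q)) :
    ∑ p ∈ (Finset.range x.length) ×ˢ (Finset.range (x.length - 1)),
      (D q (2 * (p.2 : ℤ) - 2 * (p.1 : ℤ) + 1) * P q ((x.eraseIdx p.1).eraseIdx p.2)) = 0 := by
  apply Finset.sum_involution
    (g := fun p _ => if p.1 ≤ p.2 then (p.2 + 1, p.1) else (p.2, p.1 - 1))
  · -- f a + f (g a) = 0
    intro p hp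
    simp only [Finset.mem_product, Finset.mem_range] at hp
    by_cases h : p.1 ≤ p.2
    · simp only [if_pos h]
      have hc : (2 * ((p.1 : ℕ) : ℤ) - 2 * (((p.2 + 1 : ℕ) : ℤ)) + 1)
          = -(2 * (p.2 : ℤ) - 2 * (p.1 : ℤ) + 1) := by push_cast; ring
      have he := erase_comm' x p.1 p.2 h
      simp only [hc, D_neg', he]
      ring
    · simp only [if_neg h]
      push_neg at h
      have h1 : p.2 ≤ p.1 - 1 := by omega
      have hc : (2 * (((p.1 - 1 : ℕ)) : ℤ) - 2 * ((p.2 : ℕ) : ℤ) + 1)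
          = -(2 * (p.2 : ℤ) - 2 * (p.1 : ℤ) + 1) := by
        have : ((p.1 - 1 : ℕ) : ℤ) = (p.1 : ℤ) - 1 := by omega
        rw [this]; ring
      have he := erase_comm' x p.2 (p.1 - 1) h1
      have he2 : p.1 - 1 + 1 = p.1 := by omega
      rw [he2] at he
      simp only [hc, D_neg', ← he]
      ring
  · -- no fixed points
    rintro ⟨p1, p2⟩ hp hf
    dsimp only
    by_cases h : p1 ≤ p2
    · rw [if_pos h]
      intro hcontra
      rw [Prod.mk.injEq] at hcontra
      omega
    · rw [if_neg h]
      intro hcontra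
      rw [Prod.mk.injEq] at hcontra
      omega
  · -- involution
    rintro ⟨p1, p2⟩ hp
    simp only [Finset.mem_product, Finset.mem_range] at hp
    by_cases h : p1 ≤ p2
    · rw [if_pos h]
      dsimp only
      rw [if_neg (by omega : ¬ p2 + 1 ≤ p1), Prod.mk.injEq]
      exact ⟨rfl, by omega⟩
    · rw [if_neg h]
      dsimp only
      rw [if_pos (by omega : p2 ≤ p1 - 1), Prod.mk.injEq]
      exact ⟨by omega, rfl⟩
  · -- maps into the set
    rintro ⟨p1, p2⟩ hp
    simp only [Finset.mem_product, Finset.mem_range] at hp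
    by_cases h : p1 ≤ p2
    · rw [if_pos h]
      simp only [Finset.mem_product, Finset.mem_range]
      exact ⟨by omega, by omega⟩
    · rw [if_neg h]
      simp only [Finset.mem_product, Finset.mem_range]
      exact ⟨by omega, by omega⟩

theorem R_zero (q : ℕ) (hq : 4 ≤ q) (x : List (Fin q)) (hx : Proper x) :
    ∑ i ∈ Finset.range x.length,
      D q ((x.length : ℤ) - 2 * (i : ℤ) - 1) * P q (x.eraseIdx i) = 0 := by
  obtain ⟨n, hn⟩ : ∃ n, x.length = n := ⟨_, rfl⟩
  induction n using Nat.strong_induction_on generalizing x with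
  | _ n IH =>
  subst hn
  rcases Nat.lt_or_ge x.length 2 with hsmall | hbig
  · interval_cases h : x.length
    · simp
    · rw [Finset.sum_range_one]
      norm_num [D_zero']
  · -- main case : x.length ≥ 2
    have hq' : (4:ℝ) ≤ (q:ℝ) := by exact_mod_cast hq
    have hDn : D q (x.length : ℤ) ≠ 0 :=
      ne_of_gt (D_pos q hq' (x.length : ℤ) (by exact_mod_cast Nat.one_le_iff_ne_zero.mpr (by omega)))
    have key : ∀ i ∈ Finset.range x.length,
        (∑ j ∈ Finset.range (x.length - 1),
          D q (2 * (j : ℤ) - 2 * (i : ℤ) + 1) * P q ((x.eraseIdx i).eraseIdx j))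
        = D q (x.length : ℤ) * (D q ((x.length : ℤ) - 2 * (i : ℤ) - 1) * P q (x.eraseIdx i)) := by
      intro i hi
      rw [Finset.mem_range] at hi
      have hylen : (x.eraseIdx i).length = x.length - 1 := length_eraseIdx' x i hi
      by_cases hp : Proper (x.eraseIdx i)
      · have step1 : ∀ j ∈ Finset.range (x.length - 1),
            D q (2 * (j : ℤ) - 2 * (i : ℤ) + 1) * P q ((x.eraseIdx i).eraseIdx j)
            = D q ((x.length : ℤ) - 2 * (i : ℤ) - 1)
                * (C q ((x.length : ℤ) - 2 * (j : ℤ) - 2) * P q ((x.eraseIdx i).eraseIdx j))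
              - C q ((x.length : ℤ) - 2 * (i : ℤ) - 1)
                * (D q ((x.length : ℤ) - 2 * (j : ℤ) - 2) * P q ((x.eraseIdx i).eraseIdx j)) := by
          intro j _
          rw [show (2 * (j : ℤ) - 2 * (i : ℤ) + 1)
            = ((x.length : ℤ) - 2 * (i : ℤ) - 1) - ((x.length : ℤ) - 2 * (j : ℤ) - 2) by ring,
            ← D_C_comm]
          ring
        rw [Finset.sum_congr rfl step1, Finset.sum_sub_distrib, ← Finset.mul_sum, ← Finset.mul_sum]
        have hS2 : (∑ j ∈ Finset.range (x.length - 1),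
            D q ((x.length : ℤ) - 2 * (j : ℤ) - 2) * P q ((x.eraseIdx i).eraseIdx j)) = 0 := by
          have := IH (x.length - 1) (by omega) (x.eraseIdx i) hp hylen
          rw [hylen] at this
          have hcast : ((x.length - 1 : ℕ) : ℤ) = (x.length : ℤ) - 1 := by omega
          rw [hcast] at this
          rw [← this]
          apply Finset.sum_congr rfl
          intro j _
          congr 1
          ring_nf
        have hS1 : (∑ j ∈ Finset.range (x.length - 1),
            C q ((x.length : ℤ) - 2 * (j : ℤ) - 2) * P q ((x.eraseIdx i).eraseIdx j))
            = D q (x.length : ℤ) * P q (x.eraseIdx i) := by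
          have hPy := P_eq hp (by
            intro hnil
            rw [hnil] at hylen
            simp at hylen
            omega)
          rw [hylen] at hPy
          have hcast : ((x.length - 1 : ℕ) : ℤ) + 1 = (x.length : ℤ) := by omega
          rw [hcast] at hPy
          have hsum : (∑ j ∈ Finset.range (x.length - 1),
              C q (((x.length - 1 : ℕ)) - 2 * (j : ℤ) - 1) * P q ((x.eraseIdx i).eraseIdx j))
              = ∑ j ∈ Finset.range (x.length - 1),
              C q ((x.length : ℤ) - 2 * (j : ℤ) - 2) * P q ((x.eraseIdx i).eraseIdx j) := by
            apply Finset.sum_congr rfl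
            intro j _
            congr 1
            have : ((x.length - 1 : ℕ) : ℤ) = (x.length : ℤ) - 1 := by omega
            rw [this]
            ring_nf
          rw [hsum] at hPy
          rw [hPy]
          field_simp
        rw [hS1, hS2, mul_zero, sub_zero]
        ring
      · -- non-proper deletion
        obtain ⟨h1, h2, heq⟩ := not_proper_erase hx i hi hp
        rw [P_not_proper hp, mul_zero, mul_zero]
        have hzero : ∀ j ∈ Finset.range (x.length - 1), j ∉ ({i - 1, i} : Finset ℕ) →
            D q (2 * (j : ℤ) - 2 * (i : ℤ) + 1) * P q ((x.eraseIdx i).eraseIdx j) = 0 := by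
          intro j hj hj2
          simp only [Finset.mem_insert, Finset.mem_singleton] at hj2
          push_neg at hj2
          rw [Finset.mem_range] at hj
          rw [P_not_proper (not_proper_erase_erase x i h1 h2 heq j (by omega) hj2.1 hj2.2),
            mul_zero]
        rw [← Finset.sum_subset (by
          intro j hj
          simp only [Finset.mem_insert, Finset.mem_singleton] at hj
          rw [Finset.mem_range]
          omega) hzero]
        rw [Finset.sum_pair (by omega : i - 1 ≠ i)]
        rw [erase_erase_eq x i h1 h2 heq]
        have hc1 : (2 * ((i - 1 : ℕ) : ℤ) - 2 * (i : ℤ) + 1) = -1 := by omega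
        have hc2 : (2 * (i : ℤ) - 2 * (i : ℤ) + 1) = 1 := by ring
        rw [hc1, hc2, show (-1 : ℤ) = -(1:ℤ) by ring, D_neg']
        ring
    have big := pairing q x
    rw [Finset.sum_product] at big
    rw [Finset.sum_congr rfl key, ← Finset.mul_sum] at big
    exact (mul_eq_zero.mp big).resolve_left hDn

end RZero


lemma C_sub_eq (q : ℝ) (hq : 0 ≤ q) (a b : ℤ) :
    4 * q * C q (a - b) = 4 * q * (C q a * C q b) - (q - 4) * (D q a * D q b) := by
  have h1 := two_C_mul q a b
  have h2 := C_diff q hq a b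
  linear_combination (-2 * q) * h1 - h2

lemma C_add_eq (q : ℝ) (hq : 0 ≤ q) (a b : ℤ) :
    4 * q * C q (a + b) = 4 * q * (C q a * C q b) + (q - 4) * (D q a * D q b) := by
  have h1 := two_C_mul q a b
  have h2 := C_diff q hq a b
  linear_combination (-2 * q) * h1 + h2


theorem Q_eq_Qstar_eq (q : ℕ) (hq : 4 ≤ q) (x : List (Fin q)) (hx : Proper x)
    (hn : 1 ≤ x.length) :
    (1 / D q ((x.length : ℤ) + 1)) *
        ∑ i : Fin x.length, C q (2 * (i : ℤ) + 2) * P q (x.eraseIdx i)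
      = (1 / D q ((x.length : ℤ) + 1)) *
        ∑ i : Fin x.length, C q (2 * (x.length : ℤ) - 2 * (i : ℤ)) * P q (x.eraseIdx i) ∧
    (1 / D q ((x.length : ℤ) + 1)) *
        ∑ i : Fin x.length, C q (2 * (i : ℤ) + 2) * P q (x.eraseIdx i)
      = P q x * C q ((x.length : ℤ) + 1) := by
  have hq0 : (0:ℝ) ≤ (q:ℝ) := by positivity
  have hq4 : (0:ℝ) < 4 * (q:ℝ) := by
    have : (4:ℝ) ≤ (q:ℝ) := by exact_mod_cast hq
    linarith
  have hR := R_zero q hq x hx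
  have hsum1 : (∑ i : Fin x.length, C q (2 * (i : ℤ) + 2) * P q (x.eraseIdx i))
      = ∑ i ∈ Finset.range x.length, C q (2 * (i : ℤ) + 2) * P q (x.eraseIdx i) :=
    Fin.sum_univ_eq_sum_range (fun k => C q (2 * (k : ℤ) + 2) * P q (x.eraseIdx k)) x.length
  have hsum2 : (∑ i : Fin x.length, C q (2 * (x.length : ℤ) - 2 * (i : ℤ)) * P q (x.eraseIdx i))
      = ∑ i ∈ Finset.range x.length,
          C q (2 * (x.length : ℤ) - 2 * (i : ℤ)) * P q (x.eraseIdx i) :=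
    Fin.sum_univ_eq_sum_range
      (fun k => C q (2 * (x.length : ℤ) - 2 * (k : ℤ)) * P q (x.eraseIdx k)) x.length
  set S : ℝ := ∑ i ∈ Finset.range x.length,
      C q ((x.length : ℤ) - 2 * (i : ℤ) - 1) * P q (x.eraseIdx i) with hS
  have key1 : (∑ i ∈ Finset.range x.length, C q (2 * (i : ℤ) + 2) * P q (x.eraseIdx i))
      = C q ((x.length : ℤ) + 1) * S := by
    apply mul_left_cancel₀ (ne_of_gt hq4)
    rw [Finset.mul_sum, Finset.mul_sum]
    have hstep : ∀ i ∈ Finset.range x.length,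
        4 * (q:ℝ) * (C q (2 * (i : ℤ) + 2) * P q (x.eraseIdx i))
        = 4 * (q:ℝ) * (C q ((x.length : ℤ) + 1) * (C q ((x.length : ℤ) - 2 * (i : ℤ) - 1) * P q (x.eraseIdx i)))
          - (q - 4) * (D q ((x.length : ℤ) + 1) * (D q ((x.length : ℤ) - 2 * (i : ℤ) - 1) * P q (x.eraseIdx i))) := by
      intro i _
      have h := C_sub_eq q hq0 ((x.length : ℤ) + 1) ((x.length : ℤ) - 2 * (i : ℤ) - 1)
      rw [show ((x.length : ℤ) + 1) - ((x.length : ℤ) - 2 * (i : ℤ) - 1) = 2 * (i : ℤ) + 2 by ring] at h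
      linear_combination P q (x.eraseIdx i) * h
    rw [Finset.sum_congr rfl hstep, Finset.sum_sub_distrib, ← Finset.mul_sum, ← Finset.mul_sum,
      ← Finset.mul_sum, ← Finset.mul_sum, hR, mul_zero, mul_zero, sub_zero]
  have key2 : (∑ i ∈ Finset.range x.length,
        C q (2 * (x.length : ℤ) - 2 * (i : ℤ)) * P q (x.eraseIdx i))
      = C q ((x.length : ℤ) + 1) * S := by
    apply mul_left_cancel₀ (ne_of_gt hq4)
    rw [Finset.mul_sum, Finset.mul_sum]
    have hstep : ∀ i ∈ Finset.range x.length,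
        4 * (q:ℝ) * (C q (2 * (x.length : ℤ) - 2 * (i : ℤ)) * P q (x.eraseIdx i))
        = 4 * (q:ℝ) * (C q ((x.length : ℤ) + 1) * (C q ((x.length : ℤ) - 2 * (i : ℤ) - 1) * P q (x.eraseIdx i)))
          + (q - 4) * (D q ((x.length : ℤ) + 1) * (D q ((x.length : ℤ) - 2 * (i : ℤ) - 1) * P q (x.eraseIdx i))) := by
      intro i _
      have h := C_add_eq q hq0 ((x.length : ℤ) + 1) ((x.length : ℤ) - 2 * (i : ℤ) - 1)
      rw [show ((x.length : ℤ) + 1) + ((x.length : ℤ) - 2 * (i : ℤ) - 1) = 2 * (x.length : ℤ) - 2 * (i : ℤ) by ring] at h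
      linear_combination P q (x.eraseIdx i) * h
    rw [Finset.sum_congr rfl hstep, Finset.sum_add_distrib, ← Finset.mul_sum, ← Finset.mul_sum,
      ← Finset.mul_sum, ← Finset.mul_sum, hR, mul_zero, mul_zero, add_zero]
  have hP : P q x = (1 / D q ((x.length : ℤ) + 1)) * S :=
    P_eq hx (by intro h; rw [h] at hn; simp at hn)
  constructor
  · rw [hsum1, hsum2, key1, key2]
  · rw [hsum1, key1, hP]
    ring
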